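/- Let K = L + γI with L a graph Laplacian and γ > 0, fix vertices x, v, and define the vector y ∈ ℝ^{V×V} by y_{ab} = (χ_a − χ_b)ᵀ K⁻¹ (χ_x − χ_v) / τ where τ = (χ_x − χ_v)ᵀ K⁻¹ (χ_x − χ_v) > 0. Then every entry of y lies in [−1, 1]. -/

import Mathlib

open Matrix

def bvec {V : Type*} [Fintype V] [DecidableEq V] (a b : V) : V → ℝ :=
  Pi.single a 1 - Pi.single b 1

lemma bvec_dot {V : Type*} [Fintype V] [DecidableEq V] (a b : V) (w : V → ℝ) :
    bvec a b ⬝ᵥ w = w a - w b := by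
  simp [bvec, sub_dotProduct, Pi.single_apply, dotProduct, sub_mul,
    Finset.sum_sub_distrib, Finset.sum_ite_eq, ite_mul]

lemma bvec_apply {V : Type*} [Fintype V] [DecidableEq V] (a b w : V) :
    bvec a b w = (if w = a then (1:ℝ) else 0) - (if w = b then 1 else 0) := by
  simp [bvec, Pi.single_apply]

lemma posDef_K {V : Type*} [Fintype V] [DecidableEq V] (G : SimpleGraph V)
    [DecidableRel G.Adj] (γ : ℝ) (hγ : 0 < γ) :
    (G.lapMatrix ℝ + γ • (1 : Matrix V V ℝ)).PosDef := by
  refine Matrix.PosDef.posSemidef_add (SimpleGraph.posSemidef_lapMatrix ℝ G) ?_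
  rw [smul_one_eq_diagonal]
  exact Matrix.posDef_diagonal_iff.mpr fun _ => hγ

lemma lap_mulVec_nonneg_at_max {V : Type*} [Fintype V] [DecidableEq V]
    (G : SimpleGraph V) [DecidableRel G.Adj] (u : V → ℝ) (m : V)
    (hm : ∀ w, u w ≤ u m) : 0 ≤ (G.lapMatrix ℝ *ᵥ u) m := by
  rw [SimpleGraph.lapMatrix_mulVec_apply, sub_nonneg]
  calc ∑ j ∈ G.neighborFinset m, u j ≤ ∑ j ∈ G.neighborFinset m, u m :=
        Finset.sum_le_sum fun j _ => hm j
    _ = G.degree m * u m := by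
        rw [Finset.sum_const, SimpleGraph.card_neighborFinset_eq_degree]
        ring

lemma lap_mulVec_nonpos_at_min {V : Type*} [Fintype V] [DecidableEq V]
    (G : SimpleGraph V) [DecidableRel G.Adj] (u : V → ℝ) (m : V)
    (hm : ∀ w, u m ≤ u w) : (G.lapMatrix ℝ *ᵥ u) m ≤ 0 := by
  have := lap_mulVec_nonneg_at_max G (-u) m (fun w => by simpa using hm w)
  have hneg : G.lapMatrix ℝ *ᵥ (-u) = -(G.lapMatrix ℝ *ᵥ u) := by
    simp [Matrix.mulVec_neg]
  rw [hneg] at this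
  simpa using this

theorem stmt_14 {V : Type*} [Fintype V] [DecidableEq V] (G : SimpleGraph V)
    [DecidableRel G.Adj] (γ : ℝ) (hγ : 0 < γ)
    (K : Matrix V V ℝ) (hK : K = G.lapMatrix ℝ + γ • (1 : Matrix V V ℝ))
    (x v : V) (hxv : x ≠ v) :
    0 < bvec x v ⬝ᵥ K⁻¹.mulVec (bvec x v) ∧
    ∀ a b : V,
      -1 ≤ (bvec a b ⬝ᵥ K⁻¹.mulVec (bvec x v)) /
          (bvec x v ⬝ᵥ K⁻¹.mulVec (bvec x v)) ∧
      (bvec a b ⬝ᵥ K⁻¹.mulVec (bvec x v)) /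
          (bvec x v ⬝ᵥ K⁻¹.mulVec (bvec x v)) ≤ 1 := by
  have hPD : K.PosDef := hK ▸ posDef_K G γ hγ
  set u : V → ℝ := K⁻¹ *ᵥ bvec x v with hu
  -- K u = b
  have hKu : K *ᵥ u = bvec x v := by
    rw [hu, mulVec_mulVec,
      Matrix.mul_nonsing_inv K ((Matrix.isUnit_iff_isUnit_det K).mp hPD.isUnit), one_mulVec]
  -- entrywise equation
  have hentry : ∀ w, (G.lapMatrix ℝ *ᵥ u) w + γ * u w = bvec x v w := by
    intro w
    have := congrFun hKu w
    rw [hK, add_mulVec, smul_mulVec, one_mulVec] at this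
    simpa using this
  -- sum of u is zero
  have hsum : ∑ w, u w = 0 := by
    have h1 : ∑ w, ((G.lapMatrix ℝ *ᵥ u) w + γ * u w) = ∑ w, bvec x v w :=
      Finset.sum_congr rfl fun w _ => hentry w
    have h2 : ∑ w, bvec x v w = 0 := by
      simp [bvec_apply, Finset.sum_sub_distrib, Finset.sum_ite_eq']
    have h3 : ∑ w, (G.lapMatrix ℝ *ᵥ u) w = 0 := by
      have hv : (fun _ : V => (1:ℝ)) ⬝ᵥ (G.lapMatrix ℝ *ᵥ u) = 0 := by
        rw [dotProduct_mulVec, ← Matrix.mulVec_transpose,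
          (SimpleGraph.isSymm_lapMatrix (R := ℝ) (G := G)).eq, SimpleGraph.lapMatrix_mulVec_const_eq_zero]
        simp
      simpa [dotProduct] using hv
    rw [Finset.sum_add_distrib, h3, zero_add, ← Finset.mul_sum, h2] at h1
    exact (mul_eq_zero.mp h1).resolve_left (ne_of_gt hγ)
  -- max principle
  have hmax : ∀ w, u w ≤ u x := by
    obtain ⟨m, -, hm⟩ := Finset.exists_max_image Finset.univ u ⟨x, Finset.mem_univ x⟩
    have hm' : ∀ w, u w ≤ u m := fun w => hm w (Finset.mem_univ w)
    by_cases hcase : u m ≤ u x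
    · exact fun w => le_trans (hm' w) hcase
    · exfalso
      push_neg at hcase
      have hmx : m ≠ x := fun h => by rw [h] at hcase; exact lt_irrefl _ hcase
      have hb : bvec x v m ≤ 0 := by
        rw [bvec_apply]; simp [hmx]; split <;> norm_num
      have hL := lap_mulVec_nonneg_at_max G u m hm'
      have hγum : γ * u m ≤ 0 := by have := hentry m; nlinarith
      have hum : u m ≤ 0 := nonpos_of_mul_nonpos_right (by linarith) hγ
      have hzero : ∀ w ∈ Finset.univ, u w = 0 :=
        (Finset.sum_eq_zero_iff_of_nonpos fun w _ => le_trans (hm' w) hum).mp hsum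
      have : u x = u m := by
        rw [hzero x (Finset.mem_univ x), hzero m (Finset.mem_univ m)]
      exact absurd this (ne_of_lt hcase)
  -- min principle
  have hmin : ∀ w, u v ≤ u w := by
    obtain ⟨m, -, hm⟩ := Finset.exists_min_image Finset.univ u ⟨v, Finset.mem_univ v⟩
    have hm' : ∀ w, u m ≤ u w := fun w => hm w (Finset.mem_univ w)
    by_cases hcase : u v ≤ u m
    · exact fun w => le_trans hcase (hm' w)
    · exfalso
      push_neg at hcase
      have hmv : m ≠ v := fun h => by rw [h] at hcase; exact lt_irrefl _ hcase
      have hb : 0 ≤ bvec x v m := by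
        rw [bvec_apply]; simp [hmv]; split <;> norm_num
      have hL := lap_mulVec_nonpos_at_min G u m hm'
      have hγum : 0 ≤ γ * u m := by have := hentry m; nlinarith
      have hum : 0 ≤ u m := nonneg_of_mul_nonneg_right (by linarith) hγ
      have hzero : ∀ w ∈ Finset.univ, u w = 0 :=
        (Finset.sum_eq_zero_iff_of_nonneg fun w _ => le_trans hum (hm' w)).mp hsum
      have : u v = u m := by
        rw [hzero v (Finset.mem_univ v), hzero m (Finset.mem_univ m)]
      exact absurd this (ne_of_gt hcase)
  -- τ > 0
  have hbne : bvec x v ≠ 0 := by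
    intro h
    have := congrFun h x
    rw [bvec_apply] at this
    simp [hxv] at this
  have hτ : 0 < bvec x v ⬝ᵥ K⁻¹ *ᵥ bvec x v := by
    have := hPD.inv.dotProduct_mulVec_pos hbne
    simpa using this
  refine ⟨hτ, fun a b => ?_⟩
  have hub : bvec a b ⬝ᵥ K⁻¹ *ᵥ bvec x v = u a - u b := bvec_dot a b u
  have hτeq : bvec x v ⬝ᵥ K⁻¹ *ᵥ bvec x v = u x - u v := bvec_dot x v u
  have h1 : u a - u b ≤ u x - u v := by
    have := hmax a; have := hmin b; linarith
  have h2 : -(u x - u v) ≤ u a - u b := by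
    have := hmax b; have := hmin a; linarith
  constructor
  · rw [le_div_iff₀ hτ, hub, hτeq]; linarith
  · rw [div_le_one hτ, hub, hτeq]; exact h1
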